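/- Let A be a symmetric n×n matrix with integer entries, with spectral decomposition given by distinct real eigenvalues θ_1,…,θ_m and idempotents E_1,…,E_m, and let P be a density matrix all of whose entries are rational. If the eigenvalue support of P satisfies the ratio condition, then there is a squarefree positive integer Δ such that for every pair (r,s) with E_r·P·E_s ≠ 0 there is an integer k with θ_r − θ_s = k·√Δ. -/

import Mathlib

open Matrix
open scoped ComplexOrder

open Matrix Polynomial

lemma aux_rat_int {q : ℚ} {Δ : ℕ} (hΔ : Squarefree Δ) (z : ℤ) (h : q ^ 2 * (Δ : ℚ) = (z : ℚ)) :
    ∃ k : ℤ, q = (k : ℚ) := by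
  have hq : (q.num : ℚ) = q * (q.den : ℚ) := by rw [mul_comm, Rat.den_mul_eq_num]
  have hd : ((q.den : ℤ)) ^ 2 ∣ q.num ^ 2 * (Δ : ℤ) := by
    have h1 : (q.num : ℚ) ^ 2 * (Δ : ℚ) = (z : ℚ) * (q.den : ℚ) ^ 2 := by
      rw [hq]; nlinarith [h]
    have h2 : q.num ^ 2 * (Δ : ℤ) = z * (q.den : ℤ) ^ 2 := by exact_mod_cast h1
    exact ⟨z, by linarith [h2]⟩
  have hcop : IsCoprime ((q.den : ℤ)) q.num := by
    rw [Int.isCoprime_iff_gcd_eq_one]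
    simp only [Int.gcd, Int.natAbs_natCast]; rw [Nat.gcd_comm]; exact q.reduced
  have hdvd : ((q.den : ℤ)) ^ 2 ∣ (Δ : ℤ) :=
    (hcop.pow (m := 2) (n := 2)).dvd_of_dvd_mul_left hd
  have hdvdN : q.den * q.den ∣ Δ := by
    have h3 : ((q.den * q.den : ℕ) : ℤ) ∣ ((Δ : ℕ) : ℤ) := by push_cast; rw [← pow_two]; exact hdvd
    exact Int.natCast_dvd_natCast.mp h3
  have hden1 : q.den = 1 := Nat.isUnit_iff.mp (hΔ _ hdvdN)
  exact ⟨q.num, by rw [← @Rat.num_div_den q, hden1]; simp⟩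

lemma aux_int_of_integral {q : ℚ} (h : IsIntegral ℤ ((q : ℂ))) : ∃ z : ℤ, q = (z : ℚ) := by
  have hinj : Function.Injective (algebraMap ℚ ℂ) := (algebraMap ℚ ℂ).injective
  have h2 : IsIntegral ℤ q := by
    rw [← isIntegral_algHom_iff (IsScalarTower.toAlgHom ℤ ℚ ℂ) hinj]
    have : (IsScalarTower.toAlgHom ℤ ℚ ℂ) q = (q : ℂ) := by
      simp only [IsScalarTower.coe_toAlgHom']
      exact eq_ratCast (algebraMap ℚ ℂ) q
    rwa [this]
  obtain ⟨z, hz⟩ := IsIntegrallyClosed.isIntegral_iff.mp h2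
  exact ⟨z, by simpa using hz.symm⟩

lemma aux_integral_eigen {n : ℕ} (A : Matrix (Fin n) (Fin n) ℂ)
    (hAint : ∀ i j, ∃ z : ℤ, A i j = (z : ℂ)) (μ : ℂ)
    (B : Matrix (Fin n) (Fin n) ℂ) (hB : B ≠ 0) (hAB : A * B = μ • B) :
    IsIntegral ℤ μ := by
  classical
  -- eigenvector
  obtain ⟨i0, j0, hij⟩ : ∃ i j, B i j ≠ 0 := by
    by_contra hcon; push_neg at hcon
    exact hB (by ext i j; simpa using hcon i j)
  set x : Fin n → ℂ := fun i => B i j0 with hx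
  have hx0 : x ≠ 0 := by
    intro h0; exact hij (by simpa [hx] using congrFun h0 i0)
  have hmv : A.mulVec x = μ • x := by
    funext i
    have := congrFun (congrFun hAB i) j0
    simpa [Matrix.mul_apply, Matrix.mulVec, dotProduct, hx] using this
  have hdet : ((Matrix.scalar (Fin n) μ) - A).det = 0 := by
    rw [← Matrix.exists_mulVec_eq_zero_iff]
    refine ⟨x, hx0, ?_⟩
    rw [Matrix.sub_mulVec, hmv]
    have hs : (Matrix.scalar (Fin n) μ).mulVec x = μ • x := by
      have h1 : Matrix.scalar (Fin n) μ = μ • (1 : Matrix (Fin n) (Fin n) ℂ) := by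
        ext i j; simp [Matrix.scalar, Matrix.smul_apply, Matrix.one_apply, Matrix.diagonal_apply]
      rw [h1, Matrix.smul_mulVec, Matrix.one_mulVec]
    rw [hs, sub_self]
  -- charpoly eval
  have hev : A.charpoly.eval μ = 0 := by
    rw [Matrix.charpoly, eval_det, Matrix.matPolyEquiv_charmatrix]
    simpa using hdet
  -- integer charpoly
  set A0 : Matrix (Fin n) (Fin n) ℤ := Matrix.of (fun i j => Classical.choose (hAint i j)) with hA0
  have hmap : A0.map (Int.cast : ℤ → ℂ) = A := by
    ext i j; exact (Classical.choose_spec (hAint i j)).symm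
  refine ⟨A0.charpoly, A0.charpoly_monic, ?_⟩
  rw [← Polynomial.eval_map]
  have : A0.charpoly.map (algebraMap ℤ ℂ) = A.charpoly := by
    rw [← Matrix.charpoly_map]
    congr 1
  rw [this]
  exact hev

lemma aux_hankel {T : ℕ} (hT : 0 < T) (u W : Fin T → ℝ)
    (hu : Function.Injective u) (hW : ∀ k, W k ≠ 0)
    (hrat : ∀ p : ℕ, ∃ q : ℚ, ∑ k, W k * u k ^ p = (q : ℝ)) :
    ∃ q : ℚ, ∑ k, u k = (q : ℝ) := by
  classical
  choose qf hqf using hrat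
  set g : Polynomial ℝ := ∏ k : Fin T, (X - C (u k)) with hg
  have hmonic : g.Monic := monic_prod_of_monic _ _ (fun k _ => monic_X_sub_C _)
  have hdeg : g.natDegree = T := by
    rw [hg, natDegree_prod _ _ (fun k _ => X_sub_C_ne_zero (u k))]
    simp
  set c0 : Fin T → ℝ := fun j => -(g.coeff j) with hc0
  have hrec : ∀ k, u k ^ T = ∑ j : Fin T, c0 j * u k ^ (j : ℕ) := by
    intro k
    have hroot : g.eval (u k) = 0 := by
      rw [hg, eval_prod]
      exact Finset.prod_eq_zero (Finset.mem_univ k) (by simp)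
    rw [eval_eq_sum_range, hdeg] at hroot
    rw [Finset.sum_range_succ] at hroot
    have hlead : g.coeff T = 1 := by
      have := hmonic.coeff_natDegree; rwa [hdeg] at this
    rw [hlead, one_mul] at hroot
    have : u k ^ T = -∑ i ∈ Finset.range T, g.coeff i * u k ^ i := by linarith
    rw [this, ← Fin.sum_univ_eq_sum_range (fun i => g.coeff i * u k ^ i), ← Finset.sum_neg_distrib]
    exact Finset.sum_congr rfl (fun j _ => by simp [hc0])
  set H : Matrix (Fin T) (Fin T) ℝ := Matrix.of (fun i j => ∑ k, W k * u k ^ ((i : ℕ) + (j : ℕ))) with hH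
  have hHfact : H = (vandermonde u)ᵀ * (Matrix.diagonal W * vandermonde u) := by
    ext i j
    simp only [hH, Matrix.of_apply, Matrix.mul_apply, Matrix.transpose_apply, vandermonde,
      Matrix.diagonal_apply, Matrix.of_apply]
    have hin : ∀ x, ∑ y, (if x = y then W x else 0) * u y ^ (j : ℕ) = W x * u x ^ (j : ℕ) :=
      fun x => by simp
    simp_rw [hin]
    exact Finset.sum_congr rfl (fun k _ => by rw [pow_add]; ring)
  have hdetH : H.det ≠ 0 := by
    rw [hHfact, Matrix.det_mul, Matrix.det_mul, Matrix.det_transpose, Matrix.det_diagonal]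
    have hv : (vandermonde u).det ≠ 0 := by
      rw [Matrix.det_vandermonde]
      refine Finset.prod_ne_zero_iff.mpr (fun i _ => Finset.prod_ne_zero_iff.mpr (fun j hj => ?_))
      have : i ≠ j := by rintro rfl; simp [Finset.mem_Ioi] at hj
      exact sub_ne_zero_of_ne (fun h => this (hu h.symm))
    exact mul_ne_zero hv (mul_ne_zero (Finset.prod_ne_zero_iff.mpr (fun k _ => hW k)) hv)
  set Hq : Matrix (Fin T) (Fin T) ℚ := Matrix.of (fun i j => qf ((i : ℕ) + (j : ℕ))) with hHq
  set bq : Fin T → ℚ := fun i => qf ((i : ℕ) + T) with hbq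
  have hHcast : H = Hq.map ((↑) : ℚ → ℝ) := by
    ext i j; simp [hH, hHq, hqf]
  have hdetHq : Hq.det ≠ 0 := by
    intro h0
    apply hdetH
    have h1 : H.det = ((Hq.det : ℚ) : ℝ) := by
      rw [hHcast]; exact (RingHom.map_det (Rat.castHom ℝ) Hq).symm
    rw [h1, h0]; simp
  set cq : Fin T → ℚ := Hq⁻¹.mulVec bq with hcq
  have hsolq : Hq.mulVec cq = bq := by
    rw [hcq, Matrix.mulVec_mulVec, Matrix.mul_nonsing_inv _ (isUnit_iff_ne_zero.mpr hdetHq),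
      Matrix.one_mulVec]
  have hsolR : H.mulVec (fun j => (cq j : ℝ)) = fun i => (bq i : ℝ) := by
    funext i
    have := congrFun hsolq i
    rw [Matrix.mulVec, dotProduct] at this ⊢
    rw [hHcast]
    push_cast [← this]
    simp [Matrix.map_apply]
  have hsol0 : H.mulVec c0 = fun i => (bq i : ℝ) := by
    funext i
    rw [Matrix.mulVec, dotProduct]
    calc ∑ j, H i j * c0 j
        = ∑ j, ∑ k, (W k * u k ^ (i : ℕ)) * (c0 j * u k ^ (j : ℕ)) := by
          refine Finset.sum_congr rfl (fun j _ => ?_)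
          rw [hH, Matrix.of_apply, Finset.sum_mul]
          exact Finset.sum_congr rfl (fun k _ => by rw [pow_add]; ring)
      _ = ∑ k, ∑ j, (W k * u k ^ (i : ℕ)) * (c0 j * u k ^ (j : ℕ)) := Finset.sum_comm
      _ = ∑ k, W k * u k ^ ((i : ℕ) + T) := by
          refine Finset.sum_congr rfl (fun k _ => ?_)
          rw [← Finset.mul_sum, ← hrec k, pow_add]; ring
      _ = (bq i : ℝ) := by rw [hbq, ← hqf]
  have hinv : ∀ x : Fin T → ℝ, H⁻¹.mulVec (H.mulVec x) = x := by
    intro x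
    rw [Matrix.mulVec_mulVec, Matrix.nonsing_inv_mul _ (isUnit_iff_ne_zero.mpr hdetH),
      Matrix.one_mulVec]
  have hceq : c0 = fun j => (cq j : ℝ) := by
    have h1 := hinv c0
    have h2 := hinv (fun j => (cq j : ℝ))
    rw [hsol0] at h1; rw [hsolR] at h2
    rw [← h1, ← h2]
  -- conclude
  have hTlt : T - 1 < T := Nat.sub_lt hT one_pos
  have hcoeff : ∑ k, u k = -(g.coeff (T - 1)) := by
    have := prod_X_sub_C_coeff_card_pred (Finset.univ : Finset (Fin T)) u (by simpa using hT)
    simp only [Finset.card_univ, Fintype.card_fin] at this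
    rw [hg, this, neg_neg]
  refine ⟨cq ⟨T - 1, hTlt⟩, ?_⟩
  rw [hcoeff]
  have h5 := congrFun hceq ⟨T - 1, hTlt⟩
  simp only [hc0] at h5
  simpa using h5

lemma aux_rat_mul {n : ℕ} {X Y : Matrix (Fin n) (Fin n) ℂ}
    (hX : ∀ i j, ∃ q : ℚ, X i j = (q : ℂ)) (hY : ∀ i j, ∃ q : ℚ, Y i j = (q : ℂ)) :
    ∀ i j, ∃ q : ℚ, (X * Y) i j = (q : ℂ) := by
  choose qX hqX using hX
  choose qY hqY using hY
  intro i j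
  refine ⟨∑ k, qX i k * qY k j, ?_⟩
  rw [Matrix.mul_apply]
  push_cast
  exact Finset.sum_congr rfl (fun k _ => by rw [hqX, hqY])

lemma aux_rat_sub {n : ℕ} {X Y : Matrix (Fin n) (Fin n) ℂ}
    (hX : ∀ i j, ∃ q : ℚ, X i j = (q : ℂ)) (hY : ∀ i j, ∃ q : ℚ, Y i j = (q : ℂ)) :
    ∀ i j, ∃ q : ℚ, (X - Y) i j = (q : ℂ) := by
  choose qX hqX using hX
  choose qY hqY using hY
  intro i j
  exact ⟨qX i j - qY i j, by push_cast [Matrix.sub_apply, hqX, hqY]; ring⟩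

lemma aux_rat_trace {n : ℕ} {X : Matrix (Fin n) (Fin n) ℂ}
    (hX : ∀ i j, ∃ q : ℚ, X i j = (q : ℂ)) : ∃ q : ℚ, X.trace = (q : ℂ) := by
  choose qX hqX using hX
  refine ⟨∑ i, qX i i, ?_⟩
  rw [Matrix.trace]
  push_cast
  exact Finset.sum_congr rfl (fun i _ => by rw [Matrix.diag_apply, hqX])


/-- Let `A` be a symmetric integer matrix with spectral
decomposition `A = ∑ θ_r • E_r` and let `P` be a rational density matrix whose
eigenvalue support satisfies the ratio condition. Then there is a squarefree
positive integer `Δ` such that whenever `E_r·P·E_s ≠ 0`, the difference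
`θ_r − θ_s` is an integer multiple of `√Δ`. -/
theorem stmt_13 {n m : ℕ} (hn : 1 ≤ n)
    (A : Matrix (Fin n) (Fin n) ℂ)
    (hAint : ∀ i j, ∃ z : ℤ, A i j = (z : ℂ)) (hAsym : Aᵀ = A)
    (θ : Fin m → ℝ) (hθ : Function.Injective θ)
    (E : Fin m → Matrix (Fin n) (Fin n) ℂ)
    (hE0 : ∀ r, E r ≠ 0)
    (hEherm : ∀ r, (E r).IsHermitian)
    (hEmul : ∀ r s : Fin m, E r * E s = if r = s then E r else 0)
    (hEsum : ∑ r, E r = 1)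
    (hspec : A = ∑ r, (θ r : ℂ) • E r)
    (P : Matrix (Fin n) (Fin n) ℂ)
    (hP : P.PosSemidef) (hPtr : P.trace = 1)
    (hPrat : ∀ i j, ∃ q : ℚ, P i j = (q : ℂ))
    (hratio : ∀ r s k l : Fin m, E r * P * E s ≠ 0 → E k * P * E l ≠ 0 →
      θ k ≠ θ l → ∃ q : ℚ, (θ r - θ s) / (θ k - θ l) = (q : ℝ)) :
    ∃ Δ : ℕ, 0 < Δ ∧ Squarefree Δ ∧
      ∀ r s : Fin m, E r * P * E s ≠ 0 →
        ∃ k : ℤ, θ r - θ s = (k : ℝ) * Real.sqrt Δ := by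
  classical
  have hPH : Pᴴ = P := hP.1
  have hEsq : ∀ r, E r * E r = E r := fun r => by simpa using hEmul r r
  have hAE : ∀ r, A * E r = (θ r : ℂ) • E r := by
    intro r
    rw [hspec, Finset.sum_mul]
    rw [Finset.sum_eq_single r]
    · rw [smul_mul_assoc, hEsq]
    · intro k _ hk
      rw [smul_mul_assoc, hEmul, if_neg hk, smul_zero]
    · intro h; exact absurd (Finset.mem_univ r) h
  have hEA : ∀ s, E s * A = (θ s : ℂ) • E s := by
    intro s
    rw [hspec, Finset.mul_sum]
    rw [Finset.sum_eq_single s]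
    · rw [mul_smul_comm, hEsq]
    · intro k _ hk
      rw [mul_smul_comm, hEmul, if_neg (Ne.symm hk), smul_zero]
    · intro h; exact absurd (Finset.mem_univ s) h
  set M : Fin m × Fin m → Matrix (Fin n) (Fin n) ℂ := fun p => E p.1 * P * E p.2 with hMdef
  set c : Fin m × Fin m → ℝ := fun p => ∑ i, ∑ j, Complex.normSq (M p i j) with hcdef
  have hc_nonneg : ∀ p, 0 ≤ c p := fun p =>
    Finset.sum_nonneg fun i _ => Finset.sum_nonneg fun j _ => Complex.normSq_nonneg _
  have hc_zero : ∀ p, c p = 0 ↔ M p = 0 := by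
    intro p
    constructor
    · intro h0
      ext i j
      have h1 := (Finset.sum_eq_zero_iff_of_nonneg
        (fun i _ => Finset.sum_nonneg fun j _ => Complex.normSq_nonneg _)).mp h0 i (Finset.mem_univ i)
      have h2 := (Finset.sum_eq_zero_iff_of_nonneg
        (fun j _ => Complex.normSq_nonneg _)).mp h1 j (Finset.mem_univ j)
      simpa using Complex.normSq_eq_zero.mp h2
    · intro h0; simp [hcdef, h0]
  have hc_pos : ∀ p, M p ≠ 0 → 0 < c p := fun p hp =>
    lt_of_le_of_ne (hc_nonneg p) (fun h => hp ((hc_zero p).mp h.symm))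
  -- trace formula for single term
  have htr : ∀ p : Fin m × Fin m, Matrix.trace (M p * P) = ((c p : ℝ) : ℂ) := by
    rintro ⟨r, s⟩
    have hconj : (M (r, s))ᴴ = E s * P * E r := by
      show (E r * P * E s)ᴴ = E s * P * E r
      rw [Matrix.conjTranspose_mul, Matrix.conjTranspose_mul, hPH, (hEherm r).eq, (hEherm s).eq,
        mul_assoc]
    have hMM : M (r, s) * (M (r, s))ᴴ = (M (r, s) * P) * E r := by
      rw [hconj]
      show (E r * P * E s) * (E s * P * E r) = (E r * P * E s * P) * E r
      have h1 : (E r * P * E s) * (E s * P * E r) = E r * P * (E s * E s) * P * E r := by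
        noncomm_ring
      rw [h1, hEsq]
    have htrc : Matrix.trace (M (r, s) * P) = Matrix.trace (M (r, s) * (M (r, s))ᴴ) := by
      rw [hMM, Matrix.trace_mul_comm (M (r, s) * P) (E r)]
      congr 1
      show (E r * P * E s) * P = E r * (E r * P * E s * P)
      have h2 : E r * (E r * P * E s * P) = (E r * E r) * P * E s * P := by noncomm_ring
      rw [h2, hEsq]
    rw [htrc]
    have h3 : Matrix.trace (M (r, s) * (M (r, s))ᴴ) =
        ∑ i, ∑ k, ((Complex.normSq (M (r, s) i k) : ℝ) : ℂ) := by
      rw [Matrix.trace]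
      refine Finset.sum_congr rfl fun i _ => ?_
      rw [Matrix.diag_apply, Matrix.mul_apply]
      refine Finset.sum_congr rfl fun k _ => ?_
      rw [Matrix.conjTranspose_apply, RCLike.star_def, Complex.mul_conj]
    rw [h3, hcdef]
    push_cast
    rfl
  set d : Fin m × Fin m → ℝ := fun p => θ p.1 - θ p.2 with hddef
  set N : ℕ → Matrix (Fin n) (Fin n) ℂ :=
    fun p => ∑ rs : Fin m × Fin m, ((d rs : ℝ) : ℂ) ^ p • M rs with hNdef
  have hN0 : N 0 = P := by
    rw [hNdef]
    simp only [pow_zero, one_smul]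
    have h1 : ∑ rs : Fin m × Fin m, M rs = (∑ r, E r) * P * (∑ s, E s) := by
      rw [Finset.sum_mul, Finset.sum_mul_sum, Fintype.sum_prod_type]
    rw [h1, hEsum, one_mul, mul_one]
  have hAM : ∀ rs : Fin m × Fin m, A * M rs = ((θ rs.1 : ℝ) : ℂ) • M rs := by
    rintro ⟨r, s⟩
    show A * (E r * P * E s) = ((θ r : ℝ) : ℂ) • (E r * P * E s)
    have h1 : A * (E r * P * E s) = (A * E r) * P * E s := by noncomm_ring
    rw [h1, hAE, smul_mul_assoc, smul_mul_assoc]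
  have hMA : ∀ rs : Fin m × Fin m, M rs * A = ((θ rs.2 : ℝ) : ℂ) • M rs := by
    rintro ⟨r, s⟩
    show (E r * P * E s) * A = ((θ s : ℝ) : ℂ) • (E r * P * E s)
    have h1 : (E r * P * E s) * A = E r * P * (E s * A) := by noncomm_ring
    rw [h1, hEA, mul_smul_comm]
  have hNrec : ∀ p : ℕ, N (p + 1) = A * N p - N p * A := by
    intro p
    rw [hNdef]
    simp only
    rw [Matrix.mul_sum, Matrix.sum_mul, ← Finset.sum_sub_distrib]
    refine Finset.sum_congr rfl fun rs _ => ?_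
    rw [mul_smul_comm, smul_mul_assoc, hAM, hMA, smul_smul, smul_smul, ← sub_smul, ← mul_sub,
      pow_succ]
    congr 1
    rw [hddef]
    push_cast
    ring
  have hNrat : ∀ p, ∀ i j, ∃ q : ℚ, N p i j = (q : ℂ) := by
    intro p
    induction p with
    | zero => rw [hN0]; exact hPrat
    | succ p ih =>
      rw [hNrec p]
      have hArat : ∀ i j, ∃ q : ℚ, A i j = (q : ℂ) := by
        intro i j
        obtain ⟨z, hz⟩ := hAint i j
        exact ⟨(z : ℚ), by rw [hz]; push_cast; rfl⟩
      exact aux_rat_sub (aux_rat_mul hArat ih) (aux_rat_mul ih hArat)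
  set t : ℕ → ℝ := fun p => ∑ rs : Fin m × Fin m, d rs ^ p * c rs with htdef
  have htrN : ∀ p, Matrix.trace (N p * P) = ((t p : ℝ) : ℂ) := by
    intro p
    rw [hNdef]
    simp only
    rw [Matrix.sum_mul, Matrix.trace_sum]
    simp only [Matrix.smul_mul, Matrix.trace_smul]
    rw [htdef]
    push_cast
    refine Finset.sum_congr rfl fun rs _ => ?_
    rw [htr rs, smul_eq_mul]
  have ht_rat : ∀ p, ∃ q : ℚ, t p = (q : ℝ) := by
    intro p
    obtain ⟨q, hq⟩ := aux_rat_trace (aux_rat_mul (hNrat p) hPrat)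
    refine ⟨q, ?_⟩
    have h1 : ((t p : ℝ) : ℂ) = ((q : ℝ) : ℂ) := by
      rw [← htrN p, hq]; norm_cast
    exact_mod_cast h1
  set supp : Finset (Fin m × Fin m) := Finset.univ.filter (fun rs => M rs ≠ 0) with hsuppdef
  by_cases hcase : ∀ rs ∈ supp, rs.1 = rs.2
  · refine ⟨1, one_pos, squarefree_one, fun r s hrs => ⟨0, ?_⟩⟩
    have hmem : (r, s) ∈ supp := Finset.mem_filter.mpr ⟨Finset.mem_univ _, hrs⟩
    have heq : r = s := hcase (r, s) hmem
    rw [heq]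
    simp
  · push_neg at hcase
    obtain ⟨kl, hklmem, hklne⟩ := hcase
    have hklM : M kl ≠ 0 := (Finset.mem_filter.mp hklmem).2
    have hθkl : θ kl.1 ≠ θ kl.2 := fun h => hklne (hθ h)
    have hδne : d kl ≠ 0 := sub_ne_zero_of_ne hθkl
    have hδsq : (0:ℝ) < d kl ^ 2 := by
      have h1 : 0 < |d kl| := abs_pos.mpr hδne
      calc (0:ℝ) < |d kl| ^ 2 := by positivity
        _ = d kl ^ 2 := sq_abs _
    have hratioδ : ∀ rs : Fin m × Fin m, ∃ q : ℚ, rs ∈ supp → d rs = (q : ℝ) * d kl := by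
      intro rs
      by_cases h : rs ∈ supp
      · have hM : M rs ≠ 0 := (Finset.mem_filter.mp h).2
        obtain ⟨q, hq⟩ := hratio rs.1 rs.2 kl.1 kl.2 hM hklM hθkl
        exact ⟨q, fun _ => (div_eq_iff hδne).mp hq⟩
      · exact ⟨0, fun hc => absurd hc h⟩
    set U : Finset ℝ := supp.image (fun rs => d rs ^ 2) with hUdef
    set Wt : ℝ → ℝ := fun u => ∑ rs ∈ supp.filter (fun rs => d rs ^ 2 = u), c rs with hWtdef
    have hgroup : ∀ i : ℕ, t (2 * i) = ∑ u ∈ U, Wt u * u ^ i := by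
      intro i
      have h2 : ∑ rs ∈ supp, d rs ^ (2 * i) * c rs
          = ∑ rs : Fin m × Fin m, d rs ^ (2 * i) * c rs := by
        refine Finset.sum_subset (Finset.subset_univ supp) (fun rs _ hrs => ?_)
        have hM0 : M rs = 0 := by
          by_contra hM
          exact hrs (Finset.mem_filter.mpr ⟨Finset.mem_univ _, hM⟩)
        rw [(hc_zero rs).mpr hM0, mul_zero]
      have h1 : t (2 * i) = ∑ rs ∈ supp, (d rs ^ 2) ^ i * c rs := by
        rw [htdef]
        simp only
        rw [← h2]
        exact Finset.sum_congr rfl fun rs _ => by rw [← pow_mul]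
      rw [h1, ← Finset.sum_fiberwise_of_maps_to
        (g := fun rs => d rs ^ 2) (t := U)
        (fun rs hrs => Finset.mem_image_of_mem _ hrs) (fun rs => (d rs ^ 2) ^ i * c rs)]
      refine Finset.sum_congr rfl fun u hu => ?_
      rw [hWtdef]
      simp only
      rw [Finset.sum_mul]
      refine Finset.sum_congr rfl fun rs hrs => ?_
      rw [(Finset.mem_filter.mp hrs).2]
      ring
    have hUmem : d kl ^ 2 ∈ U := Finset.mem_image_of_mem _ hklmem
    have hUne : U.Nonempty := ⟨d kl ^ 2, hUmem⟩
    have hTpos : 0 < U.card := Finset.card_pos.mpr hUne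
    set uf : Fin U.card → ℝ := fun k => ((U.orderIsoOfFin rfl k : {x // x ∈ U}) : ℝ) with hufdef
    have huf_inj : Function.Injective uf := fun a b hab =>
      (U.orderIsoOfFin rfl).injective (Subtype.ext hab)
    have huf_mem : ∀ k, uf k ∈ U := fun k => (U.orderIsoOfFin rfl k).2
    have hsum_uf : ∀ f : ℝ → ℝ, ∑ k, f (uf k) = ∑ x ∈ U, f x := by
      intro f
      rw [← Finset.sum_coe_sort U f]
      exact Equiv.sum_comp (U.orderIsoOfFin rfl).toEquiv (fun x => f ↑x)
    have hWpos : ∀ u : ℝ, u ∈ U → 0 < Wt u := by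
      intro u hu
      obtain ⟨rs, hrs, hd⟩ := Finset.mem_image.mp hu
      rw [hWtdef]
      simp only
      refine Finset.sum_pos (fun p hp => ?_) ⟨rs, Finset.mem_filter.mpr ⟨hrs, hd⟩⟩
      exact hc_pos p (Finset.mem_filter.mp (Finset.mem_filter.mp hp).1).2
    have hratP : ∀ p : ℕ, ∃ q : ℚ, ∑ k, Wt (uf k) * uf k ^ p = (q : ℝ) := by
      intro p
      obtain ⟨q, hq⟩ := ht_rat (2 * p)
      refine ⟨q, ?_⟩
      rw [hsum_uf (fun x => Wt x * x ^ p), ← hgroup p]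
      exact hq
    obtain ⟨qS, hqS⟩ := aux_hankel hTpos uf (fun k => Wt (uf k)) huf_inj
      (fun k => ne_of_gt (hWpos _ (huf_mem k))) hratP
    have hSU : ∑ x ∈ U, x = (qS : ℝ) := by
      rw [← hsum_uf (fun x => x)]
      exact hqS
    have hQex : ∀ u : ℝ, ∃ qq : ℚ, u ∈ U → u = (qq : ℝ) * d kl ^ 2 := by
      intro u
      by_cases hu : u ∈ U
      · obtain ⟨rs, hrs, hd⟩ := Finset.mem_image.mp hu
        obtain ⟨q, hq⟩ := hratioδ rs
        refine ⟨q ^ 2, fun _ => ?_⟩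
        rw [← hd, hq hrs]
        push_cast
        ring
      · exact ⟨0, fun hc => absurd hc hu⟩
    choose Q hQ using hQex
    set S : ℚ := ∑ u ∈ U, Q u with hSdef
    have hsum_eq : (qS : ℝ) = (S : ℝ) * d kl ^ 2 := by
      rw [← hSU, hSdef]
      push_cast
      rw [Finset.sum_mul]
      exact Finset.sum_congr rfl fun u hu => hQ u hu
    have hsumpos : (0:ℝ) < ∑ x ∈ U, x := by
      refine Finset.sum_pos' (fun x hx => ?_) ⟨d kl ^ 2, hUmem, hδsq⟩
      obtain ⟨rs, _, hd⟩ := Finset.mem_image.mp hx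
      rw [← hd]
      positivity
    have hqSpos : (0:ℝ) < (qS : ℝ) := by rw [← hSU]; exact hsumpos
    have hSne : (S : ℝ) ≠ 0 := by
      intro h0
      rw [hsum_eq, h0, zero_mul] at hqSpos
      exact lt_irrefl _ hqSpos
    set q0 : ℚ := qS / S with hq0def
    have hdkl2 : d kl ^ 2 = (q0 : ℝ) := by
      rw [hq0def]
      push_cast
      rw [eq_div_iff hSne, mul_comm]
      exact hsum_eq.symm
    have hIntθ : ∀ r : Fin m, IsIntegral ℤ ((θ r : ℂ)) := fun r =>
      aux_integral_eigen A hAint _ (E r) (hE0 r) (hAE r)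
    have hIntd : ∀ rs : Fin m × Fin m, IsIntegral ℤ (((d rs : ℝ) : ℂ)) := by
      rintro ⟨r, s⟩
      have h1 : ((d (r, s) : ℝ) : ℂ) = (θ r : ℂ) - (θ s : ℂ) := by
        rw [hddef]
        push_cast
        ring
      rw [h1]
      exact (hIntθ r).sub (hIntθ s)
    have hq0int : ∃ z : ℤ, q0 = (z : ℚ) := by
      apply aux_int_of_integral
      have h1 : ((q0 : ℚ) : ℂ) = (((d kl : ℝ) : ℂ)) ^ 2 := by
        rw [show ((q0 : ℚ) : ℂ) = (((q0 : ℚ) : ℝ) : ℂ) by norm_cast, ← hdkl2]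
        push_cast
        ring
      rw [h1]
      exact (hIntd kl).pow 2
    obtain ⟨z0, hz0⟩ := hq0int
    have hq0pos : 0 < q0 := by
      have h1 : (0:ℝ) < (q0 : ℝ) := by rw [← hdkl2]; exact hδsq
      exact_mod_cast h1
    have hz0pos : 0 < z0 := by
      have : (0:ℚ) < (z0:ℚ) := hz0 ▸ hq0pos
      exact_mod_cast this
    obtain ⟨Δ, b, hbΔ, hΔsf⟩ := Nat.sq_mul_squarefree z0.toNat
    have htoNat : (z0.toNat : ℤ) = z0 := Int.toNat_of_nonneg (le_of_lt hz0pos)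
    have hDpos : 0 < z0.toNat := by omega
    have hΔpos : 0 < Δ := by
      rcases Nat.eq_zero_or_pos Δ with h | h
      · rw [h, mul_zero] at hbΔ; omega
      · exact h
    have hbpos : 0 < b := by
      rcases Nat.eq_zero_or_pos b with h | h
      · rw [h] at hbΔ; simp at hbΔ; omega
      · exact h
    have hq0eq : ((b : ℚ)) ^ 2 * (Δ : ℚ) = q0 := by
      rw [hz0, ← htoNat, ← hbΔ]
      push_cast
      ring
    have hDreal : d kl ^ 2 = ((b : ℝ)) ^ 2 * (Δ : ℝ) := by
      rw [hdkl2, ← hq0eq]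
      push_cast
      ring
    have habs : d kl = (b : ℝ) * Real.sqrt Δ ∨ d kl = -((b : ℝ) * Real.sqrt Δ) := by
      have h2 : ((b : ℝ) * Real.sqrt Δ) ^ 2 = d kl ^ 2 := by
        rw [mul_pow, Real.sq_sqrt (by positivity : (0:ℝ) ≤ (Δ : ℝ)), hDreal]
      have h3 : |d kl| = |(b : ℝ) * Real.sqrt Δ| := by
        rw [← Real.sqrt_sq_eq_abs, ← Real.sqrt_sq_eq_abs, h2]
      exact abs_eq_abs.mp h3
    refine ⟨Δ, hΔpos, hΔsf, ?_⟩
    intro r s hrs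
    have hrsmem : (r, s) ∈ supp := Finset.mem_filter.mpr ⟨Finset.mem_univ _, hrs⟩
    obtain ⟨q, hq⟩ := hratioδ (r, s)
    have hdq : d (r, s) = (q : ℝ) * d kl := hq hrsmem
    have hd2int : ∃ z : ℤ, q ^ 2 * (q0 : ℚ) = (z : ℚ) := by
      apply aux_int_of_integral
      have h2 : ((d (r, s) : ℝ)) ^ 2 = ((q ^ 2 * q0 : ℚ) : ℝ) := by
        rw [hdq, mul_pow, hdkl2]
        push_cast
        ring
      have h1 : (((q ^ 2 * q0 : ℚ)) : ℂ) = (((d (r, s) : ℝ)) : ℂ) ^ 2 := by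
        rw [← Complex.ofReal_pow, h2]
        norm_cast
      rw [h1]
      exact (hIntd (r, s)).pow 2
    obtain ⟨z2, hz2⟩ := hd2int
    have hqb : ∃ k : ℤ, q * (b : ℚ) = (k : ℚ) := by
      apply aux_rat_int hΔsf z2
      calc (q * (b : ℚ)) ^ 2 * (Δ : ℚ) = q ^ 2 * ((b : ℚ) ^ 2 * (Δ : ℚ)) := by ring
        _ = q ^ 2 * q0 := by rw [hq0eq]
        _ = (z2 : ℚ) := hz2
    obtain ⟨k1, hk1⟩ := hqb
    have hcast : (q : ℝ) * (b : ℝ) = (k1 : ℝ) := by exact_mod_cast hk1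
    rcases habs with h | h
    · refine ⟨k1, ?_⟩
      show d (r, s) = (k1 : ℝ) * Real.sqrt Δ
      rw [hdq, h, ← mul_assoc, hcast]
    · refine ⟨-k1, ?_⟩
      show d (r, s) = ((-k1 : ℤ) : ℝ) * Real.sqrt Δ
      rw [hdq, h, show (q : ℝ) * -((b : ℝ) * Real.sqrt Δ)
        = -((q : ℝ) * (b : ℝ)) * Real.sqrt Δ by ring, hcast]
      push_cast
      ring
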